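/- Let p be prime, n a positive integer, and R2 = Z_p[u]/(u^2). Suppose C = <g(x) + u·p(x)> is a cyclic code of length n over R2 where g(x) ∈ Z_p[x] is monic of degree r, deg p(x) < r, and g(x) + u·p(x) divides x^n - 1 in R2[x]. Then C is a free R2-module of rank n - r with basis {x^i·(g(x) + u·p(x)) : 0 ≤ i ≤ n - r - 1}, and |C| = p^{2(n-r)}. -/

import Mathlib

open Polynomial

noncomputable section

/-- `Ru p k` is the ring `R_k = Z_p[u]/(u^k)`. -/
abbrev Ru (p k : ℕ) : Type := Polynomial (ZMod p) ⧸ Ideal.span {(X : Polynomial (ZMod p)) ^ k}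

/-- The element `u` of `Ru p k`. -/
abbrev uR (p k : ℕ) : Ru p k := Ideal.Quotient.mk _ (X : Polynomial (ZMod p))

instance (p k n : ℕ) : (Ideal.span {(X : Polynomial (Ru p k)) ^ n - 1}).IsTwoSided :=
  Ideal.instIsTwoSided_1 (α := Polynomial (Ru p k)) _

/-- `Rn p k n` is the ring `R_k[x]/(x^n - 1)`; its ideals are the cyclic codes of length `n`. -/
abbrev Rn (p k n : ℕ) : Type :=
  Polynomial (Ru p k) ⧸ Ideal.span {(X : Polynomial (Ru p k)) ^ n - 1}

/-- The natural ring map `Z_p[x] → R_k[x]/(x^n - 1)`. -/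
abbrev liftP (p k n : ℕ) : Polynomial (ZMod p) →+* Rn p k n :=
  (Ideal.Quotient.mk _).comp (mapRingHom (algebraMap (ZMod p) (Ru p k)))

/-- `u` as an element of `R_k[x]/(x^n - 1)`. -/
abbrev uu (p k n : ℕ) : Rn p k n := Ideal.Quotient.mk _ (C (uR p k))

/-- `x` as an element of `R_k[x]/(x^n - 1)`. -/
abbrev xx (p k n : ℕ) : Rn p k n := Ideal.Quotient.mk _ (X : Polynomial (Ru p k))

theorem keyBasis {R : Type} [CommRing R] [Nontrivial R] (n m : ℕ)
    (G K : R[X]) (hG : G.Monic) (hK : K.Monic) (hKdeg : K.natDegree = m)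
    (hmul : (X : R[X]) ^ n - 1 = G * K) :
    ∃ b : Module.Basis (Fin m) R
      ((Ideal.span {Ideal.Quotient.mk (Ideal.span {(X : R[X]) ^ n - 1}) G}).restrictScalars R),
      ∀ i : Fin m, (b i : R[X] ⧸ Ideal.span {(X : R[X]) ^ n - 1}) =
        (Ideal.Quotient.mk _ (X : R[X])) ^ (i : ℕ) * Ideal.Quotient.mk _ G := by
  set I : Ideal R[X] := Ideal.span {(X : R[X]) ^ n - 1} with hI
  set mk : R[X] →+* (R[X] ⧸ I) := Ideal.Quotient.mk I with hmkdef
  have hdegK : K.degree = (m : WithBot ℕ) := by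
    rw [degree_eq_natDegree hK.ne_zero, hKdeg]
  have hsm : ∀ (c : R) (f : R[X]), c • (mk f) = mk (C c * f) := by
    intro c f
    rw [hmkdef, ← Polynomial.smul_eq_C_mul]
    rfl
  have hmem : ∀ i : Fin m, mk ((X : R[X]) ^ (i : ℕ) * G) ∈
      (Ideal.span {mk G}).restrictScalars R := by
    intro i
    rw [Submodule.restrictScalars_mem, Ideal.mem_span_singleton]
    exact ⟨mk ((X : R[X]) ^ (i : ℕ)), by rw [map_mul, mul_comm]⟩
  -- linear independence in the quotient
  have hli : LinearIndependent R (fun i : Fin m => mk ((X : R[X]) ^ (i : ℕ) * G)) := by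
    rw [Fintype.linearIndependent_iff]
    intro c hc i
    set q : R[X] := ∑ j : Fin m, C (c j) * X ^ (j : ℕ) with hq
    have hsum : (∑ j : Fin m, c j • mk ((X : R[X]) ^ (j : ℕ) * G)) = mk (q * G) := by
      rw [hq, Finset.sum_mul, map_sum]
      refine Finset.sum_congr rfl fun j _ => ?_
      rw [hsm, mul_assoc]
    rw [hsum] at hc
    have hqdeg : q.degree < (m : WithBot ℕ) := by
      refine lt_of_le_of_lt (degree_sum_le _ _) ?_
      rw [Finset.sup_lt_iff (by exact_mod_cast WithBot.bot_lt_coe m)]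
      intro j _
      exact lt_of_le_of_lt (degree_C_mul_X_pow_le _ _) (by exact_mod_cast j.isLt)
    have hmemI : q * G ∈ I := by rwa [← Ideal.Quotient.eq_zero_iff_mem]
    rw [hI, Ideal.mem_span_singleton] at hmemI
    obtain ⟨t, ht⟩ := hmemI
    have hqKt : q = K * t := by
      have h1 : G * q = G * (K * t) := by rw [mul_comm G q, ht, hmul]; ring
      exact hG.isRegular.left h1
    have ht0 : t = 0 := by
      by_contra ht0
      have : (m : WithBot ℕ) ≤ q.degree := by
        rw [hqKt, mul_comm, hK.degree_mul, hdegK]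
        have : (0 : WithBot ℕ) ≤ t.degree := by
          exact_mod_cast zero_le_degree_iff.mpr ht0
        calc (m : WithBot ℕ) = 0 + m := by rw [zero_add]
          _ ≤ t.degree + m := by exact add_le_add_left this _
      exact absurd hqdeg (not_lt.mpr this)
    have hq0 : q = 0 := by rw [hqKt, ht0, mul_zero]
    have hco : q.coeff (i : ℕ) = c i := by
      rw [hq, finset_sum_coeff]
      rw [Finset.sum_eq_single i]
      · simp
      · intro j _ hji
        rw [coeff_C_mul, coeff_X_pow, if_neg (fun h => hji (Fin.ext h.symm)), mul_zero]
      · intro h; exact absurd (Finset.mem_univ i) h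
    rw [hq0] at hco
    simpa using hco.symm
  -- spanning
  have hsp : ∀ z : R[X] ⧸ I, z ∈ Ideal.span {mk G} →
      z ∈ Submodule.span R (Set.range (fun i : Fin m => mk ((X : R[X]) ^ (i : ℕ) * G))) := by
    intro z hz
    rw [Ideal.mem_span_singleton] at hz
    obtain ⟨a, ha⟩ := hz
    obtain ⟨f, rfl⟩ := Ideal.Quotient.mk_surjective a
    have key : z = mk ((f %ₘ K) * G) := by
      rw [ha, ← map_mul]
      rw [Ideal.Quotient.mk_eq_mk_iff_sub_mem]
      rw [hI, Ideal.mem_span_singleton]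
      refine ⟨f /ₘ K, ?_⟩
      have hfd := f.modByMonic_add_div K
      linear_combination (-(f /ₘ K)) * hmul - G * hfd
    by_cases ht : f %ₘ K = 0
    · rw [key, ht, zero_mul, map_zero]; exact Submodule.zero_mem _
    · have hlt : (f %ₘ K).natDegree < m := by
        rw [natDegree_lt_iff_degree_lt ht]
        rw [← hdegK]
        exact degree_modByMonic_lt f hK
      rw [key]
      have hexp : (f %ₘ K) * G =
          ∑ i ∈ Finset.range m, C ((f %ₘ K).coeff i) * ((X : R[X]) ^ i * G) := by
        conv_lhs => rw [(f %ₘ K).as_sum_range' m hlt]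
        rw [Finset.sum_mul]
        refine Finset.sum_congr rfl fun i _ => ?_
        rw [← mul_assoc, C_mul_X_pow_eq_monomial]
      rw [hexp, map_sum]
      refine Submodule.sum_mem _ fun i hi => ?_
      rw [← hsm]
      exact Submodule.smul_mem _ _
        (Submodule.subset_span ⟨⟨i, Finset.mem_range.mp hi⟩, rfl⟩)
  -- assemble the basis
  set S : Submodule R (R[X] ⧸ I) := (Ideal.span {mk G}).restrictScalars R with hS
  let v : Fin m → S := fun i => ⟨mk ((X : R[X]) ^ (i : ℕ) * G), hmem i⟩
  have hliv : LinearIndependent R v := by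
    refine LinearIndependent.of_comp S.subtype ?_
    exact hli
  have hspan : ⊤ ≤ Submodule.span R (Set.range v) := by
    rintro ⟨z, hz⟩ -
    have hz' : z ∈ Ideal.span {mk G} := hz
    have hmap : Submodule.map S.subtype (Submodule.span R (Set.range v)) =
        Submodule.span R (Set.range (fun i : Fin m => mk ((X : R[X]) ^ (i : ℕ) * G))) := by
      rw [Submodule.map_span, ← Set.range_comp]
      rfl
    have h2 : S.subtype ⟨z, hz⟩ ∈ Submodule.map S.subtype (Submodule.span R (Set.range v)) := by
      rw [hmap]; exact hsp z hz'
    rcases h2 with ⟨w, hw, hwe⟩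
    have : w = ⟨z, hz⟩ := Subtype.ext hwe
    rwa [← this]
  refine ⟨Module.Basis.mk hliv hspan, fun i => ?_⟩
  rw [Module.Basis.mk_apply]
  show mk ((X : R[X]) ^ (i : ℕ) * G) = _
  rw [map_mul, map_pow]


theorem card_of_basis {R M : Type*} [CommRing R] [AddCommGroup M] [Module R M] {m : ℕ}
    (b : Module.Basis (Fin m) R M) : Nat.card M = Nat.card R ^ m := by
  rw [Nat.card_congr b.equivFun.toEquiv, Nat.card_fun,
    Nat.card_eq_fintype_card (α := Fin m), Fintype.card_fin]

theorem cardRu (p : ℕ) (hp : p.Prime) :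
    Nat.card (Polynomial (ZMod p) ⧸ Ideal.span {(X : Polynomial (ZMod p)) ^ 2}) = p ^ 2 := by
  haveI := Fact.mk hp
  have h1 : Nat.card (AdjoinRoot ((X : (ZMod p)[X]) ^ 2)) =
      Nat.card (ZMod p) ^ (AdjoinRoot.powerBasis' (monic_X_pow (R := ZMod p) 2)).dim :=
    card_of_basis (AdjoinRoot.powerBasis' (monic_X_pow (R := ZMod p) 2)).basis
  rw [AdjoinRoot.powerBasis'_dim, natDegree_X_pow, Nat.card_zmod] at h1
  exact h1

set_option maxHeartbeats 2000000 in
/-- Over `R_2 = Z_p[u]/(u^2)`, if `C = <g(x) + u p(x)>` with `g` monic of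
degree `r`, `deg p < deg g`, and `g(x) + u p(x) ∣ x^n - 1` in `R_2[x]`, then `C` is a free
`R_2`-module of rank `n - r` with basis `{x^i (g(x) + u p(x)) : 0 ≤ i ≤ n - r - 1}`, and
`|C| = p^{2(n-r)}`. -/
theorem stmt4 (p n r : ℕ) (hp : p.Prime) (hn : 0 < n)
    (g pp : Polynomial (ZMod p)) (Ck : Ideal (Rn p 2 n))
    (hmon : g.Monic) (hdeg : g.natDegree = r) (hppdeg : pp.degree < g.degree)
    (hdvd : (g.map (algebraMap (ZMod p) (Ru p 2)) +
        C (uR p 2) * pp.map (algebraMap (ZMod p) (Ru p 2))) ∣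
        ((X : Polynomial (Ru p 2)) ^ n - 1))
    (hC : Ck = Ideal.span {liftP p 2 n g + uu p 2 n * liftP p 2 n pp}) :
    (∃ b : Module.Basis (Fin (n - r)) (Ru p 2) (Ck.restrictScalars (Ru p 2)),
      ∀ i : Fin (n - r), (b i : Rn p 2 n) =
        xx p 2 n ^ (i : ℕ) * (liftP p 2 n g + uu p 2 n * liftP p 2 n pp)) ∧
      Nat.card Ck = p ^ (2 * (n - r)) := by

  haveI := Fact.mk hp
  haveI hNT : Nontrivial (Ru p 2) := by
    refine Ideal.Quotient.nontrivial_iff.mpr ?_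
    rw [Ne, Ideal.span_singleton_eq_top]
    intro h
    have h2 := natDegree_eq_zero_of_isUnit h
    rw [natDegree_X_pow] at h2
    exact two_ne_zero h2
  set φ := algebraMap (ZMod p) (Ru p 2) with hφ
  set G : (Ru p 2)[X] := g.map φ + C (uR p 2) * pp.map φ with hG
  have hgmap_deg : (g.map φ).degree = g.degree :=
    degree_map_eq_of_leadingCoeff_ne_zero φ
      (by rw [hmon.leadingCoeff, map_one]; exact one_ne_zero)
  have hsmall : (C (uR p 2) * pp.map φ).degree < (g.map φ).degree := by
    rw [hgmap_deg]
    calc (C (uR p 2) * pp.map φ).degree ≤ (pp.map φ).degree := by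
          refine (degree_mul_le _ _).trans ?_
          refine le_trans (add_le_add_left degree_C_le _) ?_
          simp
      _ ≤ pp.degree := degree_map_le
      _ < g.degree := hppdeg
  have hGmon : G.Monic := (hmon.map φ).add_of_left hsmall
  have hGdeg : G.natDegree = r := by
    have hdeq : G.degree = g.degree := by
      rw [hG, degree_add_eq_left_of_degree_lt hsmall, hgmap_deg]
    rw [natDegree_eq_of_degree_eq hdeq, hdeg]
  obtain ⟨K, hK⟩ := hdvd
  have hXn : ((X : (Ru p 2)[X]) ^ n - 1).Monic := by
    have h := monic_X_pow_sub_C (1 : Ru p 2) hn.ne'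
    rwa [map_one] at h
  have hKmon : K.Monic := hGmon.of_mul_monic_left (hK ▸ hXn)
  have hXdeg : ((X : (Ru p 2)[X]) ^ n - 1).natDegree = n := by
    rw [← C_1, natDegree_X_pow_sub_C]
  have hsum : n = r + K.natDegree := by
    have h := hGmon.natDegree_mul hKmon
    rw [← hK, hXdeg, hGdeg] at h
    exact h
  have hKdeg : K.natDegree = n - r := by omega
  obtain ⟨b, hb⟩ := keyBasis n (n - r) G K hGmon hKmon hKdeg hK
  have hgen : liftP p 2 n g + uu p 2 n * liftP p 2 n pp =
      Ideal.Quotient.mk (Ideal.span {(X : Polynomial (Ru p 2)) ^ n - 1}) G := by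
    rw [hG, map_add, map_mul]
    rfl
  rw [hgen] at hC
  subst hC
  refine ⟨⟨b, fun i => ?_⟩, ?_⟩
  · rw [hgen]
    exact hb i
  · have h1 : Nat.card ((Ideal.span
        {Ideal.Quotient.mk (Ideal.span {(X : Polynomial (Ru p 2)) ^ n - 1}) G}).restrictScalars
        (Ru p 2)) = Nat.card (Ru p 2) ^ (n - r) := card_of_basis b
    have h0 : Nat.card (Ideal.span
        {Ideal.Quotient.mk (Ideal.span {(X : Polynomial (Ru p 2)) ^ n - 1}) G}) =
        Nat.card ((Ideal.span
        {Ideal.Quotient.mk (Ideal.span {(X : Polynomial (Ru p 2)) ^ n - 1}) G}).restrictScalars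
        (Ru p 2)) := Nat.card_congr (Equiv.subtypeEquivRight fun x => Iff.rfl)
    rw [h0, h1, cardRu p hp, ← pow_mul]
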